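/- Let Γ be a countable group acting on a countably infinite set K (with the discrete topology), and let μ : K → Prob(Γ) satisfy: for every s ∈ Γ, ‖s·μ_x − μ_{s·x}‖₁ → 0 as x → ∞ along the cofinite filter on K. Regard each μ_x as a state on ℓ∞(Γ), φ_x(f) = Σ_t μ_x(t) f(t), so that x ↦ φ_x maps K into the weak-* compact state space S of ℓ∞(Γ); Γ acts on S by (s·φ)(f) = φ(s⁻¹·f), where (s·f)(t) = f(s⁻¹t) for f ∈ ℓ∞(Γ). Let βK be the Stone–Čech compactification of K; each s ∈ Γ extends to a homeomorphism of βK (the continuous extension of x ↦ s·x), and x ↦ φ_x extends to a continuous map φ̃ : βK → S. Then for every point p of the Stone–Čech remainder ∂^β K = βK \ K (i.e., p not in the image of the canonical embedding K → βK) and every s ∈ Γ, one has φ̃(s·p) = s·φ̃(p). -/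

import Mathlib

open Filter
open scoped ENNReal

set_option maxHeartbeats 1000000 in
/-- Let `Γ` act on a countably infinite discrete set `K` and let
`μ : K → Prob(Γ)` satisfy `‖s·μ_x − μ_{s·x}‖₁ → 0` along the cofinite filter, for
every `s ∈ Γ`. Regard each `μ_x` as a state `φ_x` on `ℓ∞(Γ)`, `φ_x(f) = Σ_t μ_x(t)f(t)`.
If `φ̃ : βK → ℓ∞(Γ)*` is the continuous extension of `x ↦ φ_x` to the Stone–Čech
compactification of `K` (with the weak-* topology on the target) and, for `s ∈ Γ`,
`h_s : βK → βK` is the continuous extension of `x ↦ s·x`, then for every point `p` of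
the Stone–Čech remainder `βK \ K`, one has `φ̃(s·p) = s·φ̃(p)`, i.e.
`φ̃(h_s p)(f) = φ̃(p)(s⁻¹·f)` for every `f ∈ ℓ∞(Γ)`, where `(s⁻¹·f)(t) = f(s t)`. -/
theorem stmt11 {Γ K : Type*} [Group Γ] [Countable Γ]
    [TopologicalSpace K] [DiscreteTopology K] [Countable K] [Infinite K]
    [MulAction Γ K]
    (μ : K → Γ → ℝ)
    (hprob : ∀ x, (∀ t, 0 ≤ μ x t) ∧ Summable (μ x) ∧ (∑' t, μ x t) = 1)
    (happrox : ∀ s : Γ,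
      Tendsto (fun x : K => ∑' t, |μ x (s⁻¹ * t) - μ (s • x) t|) cofinite (nhds 0))
    (φ : K → WeakDual ℝ (lp (fun _ : Γ => ℝ) ∞))
    (hφ : ∀ (x : K) (f : lp (fun _ : Γ => ℝ) ∞), φ x f = ∑' t, μ x t * f t)
    (φt : StoneCech K → WeakDual ℝ (lp (fun _ : Γ => ℝ) ∞))
    (hφt : Continuous φt) (hφext : ∀ x : K, φt (stoneCechUnit x) = φ x)
    (s : Γ) (hs : StoneCech K → StoneCech K) (hscont : Continuous hs)
    (hsext : ∀ x : K, hs (stoneCechUnit x) = stoneCechUnit (s • x))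
    (p : StoneCech K) (hp : p ∉ Set.range (stoneCechUnit : K → StoneCech K))
    (f g : lp (fun _ : Γ => ℝ) ∞) (hg : ∀ t : Γ, g t = f (s * t)) :
    φt (hs p) f = φt p g := by
  classical
  set G : StoneCech K → ℝ := fun q => φt (hs q) f - φt q g with hGdef
  have hGcont : Continuous G := by
    apply Continuous.sub
    · exact (WeakBilin.eval_continuous _ f).comp (hφt.comp hscont)
    · exact (WeakBilin.eval_continuous _ g).comp hφt
  -- pointwise bound for G on K
  have hfb : ∀ t : Γ, |f t| ≤ ‖f‖ := by
    intro t
    have h := lp.norm_apply_le_norm ENNReal.top_ne_zero f t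
    rwa [Real.norm_eq_abs] at h
  have hG0 : Tendsto (fun x : K => G (stoneCechUnit x)) cofinite (nhds 0) := by
    have hbound : ∀ x : K,
        ‖G (stoneCechUnit x)‖ ≤ (∑' t, |μ x (s⁻¹ * t) - μ (s • x) t|) * ‖f‖ := by
      intro x
      have hsum1 : Summable (fun t => μ (s • x) t * f t) := by
        apply Summable.of_norm_bounded
          ((hprob (s • x)).2.1.mul_right ‖f‖)
        intro t
        rw [norm_mul, Real.norm_eq_abs, Real.norm_eq_abs,
          abs_of_nonneg ((hprob (s • x)).1 t)]
        exact mul_le_mul_of_nonneg_left (hfb t) ((hprob (s • x)).1 t)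
      have hsum2' : Summable (fun t => μ x (s⁻¹ * t)) :=
        (Equiv.mulLeft s⁻¹).summable_iff.2 (hprob x).2.1
      have hsum2 : Summable (fun t => μ x (s⁻¹ * t) * f t) := by
        apply Summable.of_norm_bounded
          (hsum2'.mul_right ‖f‖)
        intro t
        rw [norm_mul, Real.norm_eq_abs, Real.norm_eq_abs,
          abs_of_nonneg ((hprob x).1 _)]
        exact mul_le_mul_of_nonneg_left (hfb t) ((hprob x).1 _)
      have hval : G (stoneCechUnit x)
          = ∑' t, (μ (s • x) t - μ x (s⁻¹ * t)) * f t := by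
        have h2 : (φ x g : ℝ) = ∑' t, μ x (s⁻¹ * t) * f t := by
          rw [hφ x g]
          have := (Equiv.mulLeft s).tsum_eq (fun u => μ x (s⁻¹ * u) * f u)
          simp only [Equiv.coe_mulLeft, inv_mul_cancel_left] at this
          rw [← this]
          exact tsum_congr fun t => by rw [hg t]
        simp only [hGdef, hsext x, hφext, hφ (s • x) f, h2]
        rw [← Summable.tsum_sub hsum1 hsum2]
        exact tsum_congr fun t => (sub_mul _ _ _).symm
      rw [hval, Real.norm_eq_abs]
      have hd : Summable (fun t => (μ (s • x) t - μ x (s⁻¹ * t)) * f t) := by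
        simpa [sub_mul] using hsum1.sub hsum2
      have habs : Summable (fun t => |μ (s • x) t - μ x (s⁻¹ * t)|) :=
        ((hprob (s • x)).2.1.sub hsum2').abs
      calc |∑' t, (μ (s • x) t - μ x (s⁻¹ * t)) * f t|
          ≤ ∑' t, ‖(μ (s • x) t - μ x (s⁻¹ * t)) * f t‖ := by
            simpa using norm_tsum_le_tsum_norm hd.norm
        _ ≤ ∑' t, |μ (s • x) t - μ x (s⁻¹ * t)| * ‖f‖ := by
            apply Summable.tsum_le_tsum _ hd.norm (habs.mul_right ‖f‖)
            intro t
            rw [norm_mul, Real.norm_eq_abs, Real.norm_eq_abs]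
            exact mul_le_mul_of_nonneg_left (hfb t) (abs_nonneg _)
        _ = (∑' t, |μ (s • x) t - μ x (s⁻¹ * t)|) * ‖f‖ := tsum_mul_right
        _ = (∑' t, |μ x (s⁻¹ * t) - μ (s • x) t|) * ‖f‖ := by
            congr 1; exact tsum_congr fun t => abs_sub_comm _ _
    exact squeeze_zero_norm hbound (by
      have h := (happrox s).mul_const ‖f‖
      rwa [zero_mul] at h)
  -- p is a cluster point of the image of the cofinite filter
  have hcl : ClusterPt p (Filter.map (stoneCechUnit : K → StoneCech K) cofinite) := by
    rw [clusterPt_iff_nonempty]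
    intro U hU V hV
    rw [Filter.mem_map, Filter.mem_cofinite] at hV
    set A : Set K := stoneCechUnit ⁻¹' V with hA
    have hpc : p ∈ closure (stoneCechUnit '' A) := by
      have hdense : closure (Set.range (stoneCechUnit : K → StoneCech K)) = Set.univ :=
        denseRange_stoneCechUnit.closure_range
      have hsplit : Set.range (stoneCechUnit : K → StoneCech K)
          = stoneCechUnit '' A ∪ stoneCechUnit '' Aᶜ := by
        rw [← Set.image_union, Set.union_compl_self, Set.image_univ]
      have hfin : (stoneCechUnit '' Aᶜ).Finite := hV.image _
      have : p ∈ closure (stoneCechUnit '' A) ∪ closure (stoneCechUnit '' Aᶜ) := by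
        rw [← closure_union, ← hsplit, hdense]; trivial
      rcases this with h | h
      · exact h
      · rw [hfin.isClosed.closure_eq] at h
        exact absurd (Set.image_subset_range _ _ h) hp
    rcases mem_closure_iff_nhds.1 hpc U hU with ⟨q, hqU, x, hxA, hxq⟩
    exact ⟨q, hqU, hxq ▸ hxA⟩
  have hne : (Filter.map (stoneCechUnit : K → StoneCech K) cofinite ⊓ nhds p).NeBot := by
    rw [inf_comm]; exact hcl
  have h1 : Tendsto G (Filter.map (stoneCechUnit : K → StoneCech K) cofinite ⊓ nhds p)
      (nhds (G p)) :=
    (hGcont.tendsto p).comp (tendsto_inf_right le_rfl)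
  have h2 : Tendsto G (Filter.map (stoneCechUnit : K → StoneCech K) cofinite ⊓ nhds p)
      (nhds 0) := by
    have : Tendsto G (Filter.map (stoneCechUnit : K → StoneCech K) cofinite) (nhds 0) := by
      rw [Filter.tendsto_map'_iff]; exact hG0
    exact this.mono_left inf_le_left
  have : G p = 0 := tendsto_nhds_unique h1 h2
  simpa [hGdef, sub_eq_zero] using this
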